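/- Let F_q be a finite field and let r_1,…,r_n, i_1,…,i_n be positive integers such that (x_j − 1)^{i_j} divides x_j^{r_j} − 1 in F_q[x_j] for all 1 ≤ j ≤ n. Let R′ = F_q[x_1,…,x_n]/⟨x_1^{r_1} − 1, …, x_n^{r_n} − 1⟩, let C = ⟨(x_1 − 1)^{i_1}···(x_n − 1)^{i_n}⟩ ⊆ R′, and for each j let C_{x_j} = ⟨(x_j − 1)^{i_j}⟩ ⊆ F_q[x_j]/⟨x_j^{r_j} − 1⟩. Then C is the iterated product code (⋯((C_{x_1} ⊗ C_{x_2}) ⊗ C_{x_3}) ⊗ ⋯) ⊗ C_{x_n}: writing each element of R′ as the class of its unique representative f = Σ f_{i_1,…,i_n} x_1^{i_1}···x_n^{i_n} with 0 ≤ i_j < r_j, the class of f belongs to C if and only if for every j ∈ {1,…,n} and every fixed choice of exponents of the variables other than x_j, the one-variable polynomial Σ_{i_j=0}^{r_j−1} f_{i_1,…,i_n} x_j^{i_j} represents an element of C_{x_j}. -/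

import Mathlib

open MvPolynomial

variable {F : Type} [Field F] {n : ℕ}

lemma upd_same (m : Fin n →₀ ℕ) (j : Fin n) (t : ℕ) : (Finsupp.update m j t) j = t := by
  classical simp [Finsupp.coe_update]

lemma upd_ne (m : Fin n →₀ ℕ) {j k : Fin n} (h : k ≠ j) (t : ℕ) :
    (Finsupp.update m j t) k = m k := by
  classical simp [Finsupp.coe_update, Function.update_of_ne h]

lemma upd_inj (m : Fin n →₀ ℕ) (j : Fin n) :
    Function.Injective (fun t => Finsupp.update m j t) := by
  intro a b h
  have := congrArg (fun d : Fin n →₀ ℕ => d j) h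
  simpa [upd_same] using this

noncomputable def sliceAux (j : Fin n) (m : Fin n →₀ ℕ) (f : MvPolynomial (Fin n) F) :
    Polynomial F :=
  Polynomial.ofFinsupp (AddMonoidAlgebra.ofCoeff (Finsupp.comapDomain (fun t => Finsupp.update m j t) (AddMonoidAlgebra.coeff f)
    ((upd_inj m j).injOn)))

lemma sliceAux_coeff (j : Fin n) (m : Fin n →₀ ℕ) (f : MvPolynomial (Fin n) F) (t : ℕ) :
    (sliceAux j m f).coeff t = coeff (Finsupp.update m j t) f := rfl

lemma coeff_zero_of_big {j : Fin n} {f : MvPolynomial (Fin n) F} {d : Fin n →₀ ℕ}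
    (h : degreeOf j f < d j) : coeff d f = 0 := by
  by_contra hc
  exact absurd (monomial_le_degreeOf j (by simpa [MvPolynomial.mem_support_iff] using hc))
    (by omega)

/-- the truncated slice equals sliceAux under a degree bound -/
lemma slice_eq_sliceAux {j : Fin n} {m : Fin n →₀ ℕ} {f : MvPolynomial (Fin n) F} {R : ℕ}
    (hf : degreeOf j f < R) :
    (∑ t ∈ Finset.range R, Polynomial.C (coeff (Finsupp.update m j t) f) * Polynomial.X ^ t)
      = sliceAux j m f := by
  apply Polynomial.ext
  intro t
  rw [Polynomial.finset_sum_coeff]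
  simp only [Polynomial.coeff_C_mul, Polynomial.coeff_X_pow, mul_ite, mul_one, mul_zero]
  rw [Finset.sum_ite_eq (Finset.range R) t]
  rw [sliceAux_coeff]
  by_cases ht : t ∈ Finset.range R
  · simp [ht]
  · simp only [ht, if_false]
    rw [coeff_zero_of_big]
    rw [upd_same]
    simp only [Finset.mem_range] at ht
    omega

lemma sliceAux_add (j : Fin n) (m : Fin n →₀ ℕ) (f g : MvPolynomial (Fin n) F) :
    sliceAux j m (f + g) = sliceAux j m f + sliceAux j m g := by
  apply Polynomial.ext; intro t
  simp [sliceAux_coeff, MvPolynomial.coeff_add]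

lemma sliceAux_sub (j : Fin n) (m : Fin n →₀ ℕ) (f g : MvPolynomial (Fin n) F) :
    sliceAux j m (f - g) = sliceAux j m f - sliceAux j m g := by
  apply Polynomial.ext; intro t
  simp [sliceAux_coeff, MvPolynomial.coeff_sub]

lemma upd_sub_single (m : Fin n →₀ ℕ) (j : Fin n) (t : ℕ) :
    Finsupp.update m j (t + 1) - Finsupp.single j 1 = Finsupp.update m j t := by
  classical
  ext k
  by_cases hk : k = j
  · subst hk; simp [Finsupp.sub_apply, upd_same]
  · simp [Finsupp.sub_apply, upd_ne m hk, Finsupp.single_apply, Ne.symm hk, hk]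

lemma sliceAux_X_mul (j : Fin n) (m : Fin n →₀ ℕ) (u : MvPolynomial (Fin n) F) :
    sliceAux j m (X j * u) = Polynomial.X * sliceAux j m u := by
  classical
  apply Polynomial.ext; intro t
  rw [sliceAux_coeff, MvPolynomial.coeff_X_mul']
  cases t with
  | zero =>
      simp [Finsupp.mem_support_iff, upd_same]
  | succ t =>
      rw [Polynomial.coeff_X_mul, sliceAux_coeff]
      simp [Finsupp.mem_support_iff, upd_same, upd_sub_single]

lemma sliceAux_Xsub1_pow_mul (j : Fin n) (m : Fin n →₀ ℕ) (s : ℕ)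
    (u : MvPolynomial (Fin n) F) :
    sliceAux j m ((X j - 1) ^ s * u) = (Polynomial.X - 1) ^ s * sliceAux j m u := by
  induction s generalizing u with
  | zero => simp
  | succ s ih =>
      have : (X j - 1) ^ (s + 1) * u = (X j - 1) ^ s * ((X j - 1) * u) := by ring
      rw [this, ih]
      have h1 : (X j - 1) * u = X j * u - u := by ring
      rw [h1, sliceAux_sub, sliceAux_X_mul]
      ring

lemma upd_upd (m : Fin n →₀ ℕ) (j : Fin n) (t s : ℕ) :
    Finsupp.update (Finsupp.update m j t) j s = Finsupp.update m j s := by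
  classical
  ext k
  by_cases hk : k = j
  · subst hk; simp [upd_same]
  · simp [upd_ne _ hk]

lemma upd_add_single (m : Fin n →₀ ℕ) (j : Fin n) (t : ℕ) :
    Finsupp.update m j 0 + Finsupp.single j t = Finsupp.update m j t := by
  classical
  ext k
  by_cases hk : k = j
  · subst hk; simp [Finsupp.add_apply, upd_same, Finsupp.single_apply]
  · simp [Finsupp.add_apply, upd_ne _ hk, Finsupp.single_apply, Ne.symm hk]

lemma upd_self' (m : Fin n →₀ ℕ) (j : Fin n) : Finsupp.update m j (m j) = m :=
  Finsupp.update_self m j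

lemma decomp (j : Fin n) (f : MvPolynomial (Fin n) F) (R : ℕ) (hfj : degreeOf j f < R) :
    f = ∑ m ∈ f.support.image (fun d => Finsupp.update d j 0),
          monomial (Finsupp.update m j 0) (1 : F) *
            Polynomial.aeval (X j)
              (∑ t ∈ Finset.range R,
                Polynomial.C (coeff (Finsupp.update m j t) f) * Polynomial.X ^ t) := by
  classical
  have key : ∀ m : Fin n →₀ ℕ,
      monomial (Finsupp.update m j 0) (1 : F) *
        Polynomial.aeval (X j)
          (∑ t ∈ Finset.range R,
            Polynomial.C (coeff (Finsupp.update m j t) f) * Polynomial.X ^ t)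
      = ∑ t ∈ Finset.range R, monomial (Finsupp.update m j t) (coeff (Finsupp.update m j t) f) := by
    intro m
    rw [map_sum, Finset.mul_sum]
    apply Finset.sum_congr rfl
    intro t _
    rw [map_mul, map_pow, Polynomial.aeval_X, Polynomial.aeval_C, MvPolynomial.algebraMap_eq,
      X_pow_eq_monomial, C_mul_monomial, monomial_mul, mul_one, one_mul, upd_add_single]
  simp_rw [key]
  apply MvPolynomial.ext
  intro e
  rw [MvPolynomial.coeff_sum]
  simp_rw [MvPolynomial.coeff_sum, MvPolynomial.coeff_monomial]
  by_cases he : coeff e f = 0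
  · rw [he]
    symm
    apply Finset.sum_eq_zero
    intro m _
    apply Finset.sum_eq_zero
    intro t _
    split_ifs with h
    · rw [h, he]
    · rfl
  · have hesupp : e ∈ f.support := by simpa [MvPolynomial.mem_support_iff] using he
    have hejR : e j < R := lt_of_le_of_lt (monomial_le_degreeOf j hesupp) hfj
    have hm0 : Finsupp.update e j 0 ∈ f.support.image (fun d => Finsupp.update d j 0) :=
      Finset.mem_image_of_mem _ hesupp
    rw [Finset.sum_eq_single_of_mem _ hm0]
    · rw [Finset.sum_eq_single_of_mem (e j) (Finset.mem_range.mpr hejR)]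
      · rw [upd_upd, upd_self']
        simp
      · intro t _ htne
        rw [upd_upd]
        have : Finsupp.update e j t ≠ e := by
          intro hcon
          exact htne (by rw [← upd_same e j t, hcon])
        simp [this]
    · intro m hm hmne
      apply Finset.sum_eq_zero
      intro t _
      have : Finsupp.update m j t ≠ e := by
        intro hcon
        apply hmne
        obtain ⟨d, _, rfl⟩ := Finset.mem_image.mp hm
        rw [← hcon, upd_upd, upd_upd]
      simp [this]

lemma dvd_iff_slices (r : Fin n → ℕ) (j : Fin n) (i : ℕ) (f : MvPolynomial (Fin n) F)
    (hf : ∀ j', degreeOf j' f < r j') :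
    (X j - 1) ^ i ∣ f ↔
      ∀ m : Fin n →₀ ℕ, (∀ j' ≠ j, m j' < r j') →
        (Polynomial.X - 1) ^ i ∣
          ∑ t ∈ Finset.range (r j),
            Polynomial.C (coeff (Finsupp.update m j t) f) * Polynomial.X ^ t := by
  constructor
  · rintro ⟨u, rfl⟩ m _
    rw [slice_eq_sliceAux (hf j), sliceAux_Xsub1_pow_mul]
    exact Dvd.intro _ rfl
  · intro h
    have hall : ∀ m : Fin n →₀ ℕ,
        (Polynomial.X - 1) ^ i ∣
          ∑ t ∈ Finset.range (r j),
            Polynomial.C (coeff (Finsupp.update m j t) f) * Polynomial.X ^ t := by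
      intro m
      by_cases hb : ∀ j' ≠ j, m j' < r j'
      · exact h m hb
      · push_neg at hb
        obtain ⟨j', hj'j, hj'⟩ := hb
        have : ∀ t ∈ Finset.range (r j),
            Polynomial.C (coeff (Finsupp.update m j t) f) * Polynomial.X ^ t = 0 := by
          intro t _
          have : coeff (Finsupp.update m j t) f = 0 := by
            apply coeff_zero_of_big (j := j')
            rw [upd_ne _ hj'j]
            have := hf j'
            omega
          simp [this]
        rw [Finset.sum_congr rfl this]
        simp
    rw [decomp j f (r j) (hf j)]
    apply Finset.dvd_sum
    intro m _
    apply dvd_mul_of_dvd_right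
    have := map_dvd (Polynomial.aeval (X j : MvPolynomial (Fin n) F)) (hall m)
    simpa using this

noncomputable def psi (j : Fin n) : MvPolynomial (Fin n) F →ₐ[F] MvPolynomial (Fin n) F :=
  aeval (fun k => if k = j then 1 else X k)

@[simp] lemma psi_X_self (j : Fin n) : psi j (X j : MvPolynomial (Fin n) F) = 1 := by
  simp [psi]

@[simp] lemma psi_X_ne (j : Fin n) {k : Fin n} (h : k ≠ j) :
    psi j (X k : MvPolynomial (Fin n) F) = X k := by
  simp [psi, h]

lemma X_sub_one_dvd_sub_psi (j : Fin n) (f : MvPolynomial (Fin n) F) :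
    (X j - 1) ∣ f - psi j f := by
  induction f using MvPolynomial.induction_on with
  | C a => simp [psi]
  | add p q hp hq =>
      have : p + q - psi j (p + q) = (p - psi j p) + (q - psi j q) := by
        rw [map_add]; ring
      rw [this]; exact dvd_add hp hq
  | mul_X p k hp =>
      by_cases hk : k = j
      · have hpsi : psi j (X k : MvPolynomial (Fin n) F) = 1 := by
          rw [hk]; exact psi_X_self j
        have : p * X k - psi j (p * X k) = p * (X j - 1) + (p - psi j p) := by
          rw [map_mul, hpsi, mul_one, hk]; ring
        rw [this]
        exact dvd_add (Dvd.intro_left _ rfl) hp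
      · have : p * X k - psi j (p * X k) = (p - psi j p) * X k := by
          rw [map_mul, psi_X_ne j hk]; ring
        rw [this]
        exact Dvd.dvd.mul_right hp _
  
lemma X_sub_one_ne_zero (j : Fin n) : (X j - 1 : MvPolynomial (Fin n) F) ≠ 0 := by
  intro h
  have := congrArg constantCoeff h
  simp at this

lemma prime_X_sub_one (j : Fin n) : Prime (X j - 1 : MvPolynomial (Fin n) F) := by
  refine ⟨X_sub_one_ne_zero j, ?_, ?_⟩
  · intro hu
    have := hu.map (psi j (F := F))
    rw [map_sub, psi_X_self, map_one, sub_self] at this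
    exact not_isUnit_zero this
  · intro a b hab
    have h0 : psi j a * psi j b = 0 := by
      obtain ⟨c, hc⟩ := hab
      rw [← map_mul, hc, map_mul, map_sub, psi_X_self, map_one, sub_self, zero_mul]
    rcases mul_eq_zero.mp h0 with h | h
    · left
      have := X_sub_one_dvd_sub_psi j a
      rw [h, sub_zero] at this
      exact this
    · right
      have := X_sub_one_dvd_sub_psi j b
      rw [h, sub_zero] at this
      exact this

lemma not_dvd_X_sub_one {j k : Fin n} (h : k ≠ j) :
    ¬ (X k - 1 : MvPolynomial (Fin n) F) ∣ (X j - 1) := by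
  rintro ⟨c, hc⟩
  have := congrArg (psi k) hc
  rw [map_sub, psi_X_ne k (Ne.symm h), map_mul, map_sub, psi_X_self, map_one, sub_self,
    zero_mul] at this
  exact X_sub_one_ne_zero j (by simpa using this)

lemma prod_pow_dvd (ι : Fin n → ℕ) (f : MvPolynomial (Fin n) F)
    (h : ∀ j, (X j - 1) ^ ι j ∣ f) :
    (∏ j : Fin n, (X j - 1) ^ ι j : MvPolynomial (Fin n) F) ∣ f := by
  classical
  have : ∀ s : Finset (Fin n), (∏ j ∈ s, (X j - 1) ^ ι j : MvPolynomial (Fin n) F) ∣ f := by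
    intro s
    induction s using Finset.induction_on with
    | empty => simp
    | @insert k s' hk ih =>
        obtain ⟨u, hu⟩ := ih
        have hnd : ¬ (X k - 1 : MvPolynomial (Fin n) F) ∣ ∏ j ∈ s', (X j - 1) ^ ι j := by
          intro hdd
          obtain ⟨j', hj's, hj'⟩ := (prime_X_sub_one k).exists_mem_finset_dvd hdd
          have hj'k : j' ≠ k := fun hq => hk (hq ▸ hj's)
          exact not_dvd_X_sub_one (Ne.symm hj'k)
            ((prime_X_sub_one k).dvd_of_dvd_pow hj')
        have hdvd' : (X k - 1 : MvPolynomial (Fin n) F) ^ ι k ∣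
            (∏ j ∈ s', (X j - 1) ^ ι j) * u := hu ▸ h k
        obtain ⟨v, hv⟩ := (prime_X_sub_one k).pow_dvd_of_dvd_mul_left _ hnd hdvd'
        rw [Finset.prod_insert hk]
        exact ⟨v, by rw [hu, hv]; ring⟩
  exact this Finset.univ

noncomputable def redAt (r : Fin n → ℕ) (j : Fin n) (d : Fin n →₀ ℕ) : Fin n →₀ ℕ :=
  d.update j (d j % r j)

lemma redAt_apply_self (r : Fin n → ℕ) (j : Fin n) (d : Fin n →₀ ℕ) :
    redAt r j d j = d j % r j := upd_same d j _

lemma redAt_apply_ne (r : Fin n → ℕ) (j : Fin n) (d : Fin n →₀ ℕ) {k : Fin n} (h : k ≠ j) :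
    redAt r j d k = d k := upd_ne d h _

noncomputable def rho (r : Fin n → ℕ) (j : Fin n) :
    MvPolynomial (Fin n) F →ₗ[F] MvPolynomial (Fin n) F :=
  AddMonoidAlgebra.mapDomainLinearMap F F (redAt r j)

lemma rho_monomial (r : Fin n → ℕ) (j : Fin n) (d : Fin n →₀ ℕ) (c : F) :
    rho r j (monomial d c) = monomial (redAt r j d) c := by
  rw [← single_eq_monomial, ← single_eq_monomial]
  exact AddMonoidAlgebra.mapDomainLinearMap_single _ _ _

lemma rho_id (r : Fin n → ℕ) (j : Fin n) (f : MvPolynomial (Fin n) F)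
    (h : degreeOf j f < r j) : rho r j f = f := by
  have : Finsupp.mapDomain (redAt r j) (AddMonoidAlgebra.coeff f) = Finsupp.mapDomain id (AddMonoidAlgebra.coeff f) := by
    apply Finsupp.mapDomain_congr
    intro d hd
    have hdj : d j < r j := lt_of_le_of_lt (monomial_le_degreeOf j hd) h
    ext k
    by_cases hk : k = j
    · subst hk; rw [redAt_apply_self, Nat.mod_eq_of_lt hdj]; rfl
    · rw [redAt_apply_ne r j d hk]; rfl
  rw [rho]
  show AddMonoidAlgebra.ofCoeff (Finsupp.mapDomain (redAt r j) (AddMonoidAlgebra.coeff f)) = f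
  rw [this, Finsupp.mapDomain_id]

lemma redAt_add (r : Fin n → ℕ) (k : Fin n) {d : Fin n →₀ ℕ} (e : Fin n →₀ ℕ)
    (hd : d k = 0) : redAt r k (d + e) = d + redAt r k e := by
  ext i
  by_cases hi : i = k
  · subst hi
    rw [redAt_apply_self, Finsupp.add_apply, Finsupp.add_apply, redAt_apply_self, hd,
      zero_add, zero_add]
  · rw [redAt_apply_ne r k _ hi, Finsupp.add_apply, Finsupp.add_apply,
      redAt_apply_ne r k _ hi]

lemma rho_monomial_mul (r : Fin n → ℕ) (k : Fin n) (d : Fin n →₀ ℕ) (c : F)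
    (hd : d k = 0) (u : MvPolynomial (Fin n) F) :
    rho r k (monomial d c * u) = monomial d c * rho r k u := by
  induction u using MvPolynomial.induction_on' with
  | monomial e c' =>
      rw [monomial_mul, rho_monomial, rho_monomial, monomial_mul, redAt_add r k e hd]
  | add p q hp hq =>
      rw [mul_add, map_add, hp, hq, map_add, mul_add]

lemma rho_X_sub_one_pow_mul (r : Fin n → ℕ) {j k : Fin n} (h : j ≠ k) (s : ℕ)
    (u : MvPolynomial (Fin n) F) :
    rho r k ((X j - 1) ^ s * u) = (X j - 1) ^ s * rho r k u := by
  induction s generalizing u with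
  | zero => simp
  | succ s ih =>
      have e1 : (X j - 1) ^ (s + 1) * u = (X j - 1) ^ s * ((X j - 1) * u) := by ring
      rw [e1, ih]
      have e2 : (X j - 1) * u = monomial (Finsupp.single j 1) (1 : F) * u - monomial 0 1 * u := by
        rw [← X_pow_eq_monomial, pow_one]
        simp [sub_mul]
      have h1 : Finsupp.single j (1 : ℕ) k = 0 := by
        rw [Finsupp.single_apply, if_neg h]
      have h0 : (0 : Fin n →₀ ℕ) k = 0 := rfl
      rw [e2, map_sub, rho_monomial_mul r k _ _ h1, rho_monomial_mul r k _ _ h0]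
      have e3 : (monomial (Finsupp.single j 1) (1 : F)) = X j := by
        rw [← X_pow_eq_monomial, pow_one]
      rw [e3]
      have : (monomial 0 1 : MvPolynomial (Fin n) F) = 1 := by
        simp
      rw [this]
      ring

lemma rho_kill (r : Fin n → ℕ) (k : Fin n) (u : MvPolynomial (Fin n) F) :
    rho r k (u * (X k ^ r k - 1)) = 0 := by
  induction u using MvPolynomial.induction_on' with
  | monomial e c =>
      have : monomial e c * (X k ^ r k - 1) =
          monomial (e + Finsupp.single k (r k)) c - monomial e c := by
        rw [mul_sub, mul_one, X_pow_eq_monomial, monomial_mul, mul_one]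
      rw [this, map_sub, rho_monomial, rho_monomial]
      have : redAt r k (e + Finsupp.single k (r k)) = redAt r k e := by
        ext i
        by_cases hi : i = k
        · subst hi
          rw [redAt_apply_self, redAt_apply_self, Finsupp.add_apply, Finsupp.single_apply,
            if_pos rfl, Nat.add_mod_right]
        · rw [redAt_apply_ne r k _ hi, redAt_apply_ne r k _ hi, Finsupp.add_apply,
            Finsupp.single_apply, if_neg (Ne.symm hi), add_zero]
      rw [this, sub_self]
  | add p q hp hq =>
      rw [add_mul, map_add, hp, hq, add_zero]

lemma gen_dvd_sub_rho (r : Fin n → ℕ) (k : Fin n) (h : MvPolynomial (Fin n) F) :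
    (X k ^ r k - 1) ∣ h - rho r k h := by
  induction h using MvPolynomial.induction_on' with
  | monomial d c =>
      rw [rho_monomial]
      have hexp : redAt r k d + Finsupp.single k (r k * (d k / r k)) = d := by
        ext i
        by_cases hi : i = k
        · subst hi
          rw [Finsupp.add_apply, redAt_apply_self, Finsupp.single_apply, if_pos rfl,
            Nat.mod_add_div]
        · rw [Finsupp.add_apply, redAt_apply_ne r k _ hi, Finsupp.single_apply,
            if_neg (Ne.symm hi), add_zero]
      have e1 : monomial d c =
          monomial (redAt r k d) c * (X k ^ r k) ^ (d k / r k) := by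
        rw [← pow_mul, X_pow_eq_monomial, monomial_mul, mul_one, hexp]
      have e2 : monomial d c - monomial (redAt r k d) c
          = monomial (redAt r k d) c * ((X k ^ r k) ^ (d k / r k) - 1 ^ (d k / r k)) := by
        rw [one_pow, mul_sub, mul_one, ← e1]
      rw [e2]
      exact Dvd.dvd.mul_left (sub_dvd_pow_sub_pow _ _ _) _
  | add p q hp hq =>
      have : p + q - rho r k (p + q) = (p - rho r k p) + (q - rho r k q) := by
        rw [map_add]; ring
      rw [this]
      exact dvd_add hp hq

noncomputable def rhoL (r : Fin n → ℕ) :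
    List (Fin n) → MvPolynomial (Fin n) F →ₗ[F] MvPolynomial (Fin n) F
  | [] => LinearMap.id
  | k :: l => (rho r k).comp (rhoL r l)

lemma rhoL_id (r : Fin n → ℕ) (l : List (Fin n)) (f : MvPolynomial (Fin n) F)
    (hf : ∀ j, degreeOf j f < r j) : rhoL r l f = f := by
  induction l with
  | nil => rfl
  | cons k l ih =>
      show rho r k (rhoL r l f) = f
      rw [ih, rho_id r k f (hf k)]

lemma rho_pres_dvd (r : Fin n → ℕ) (j k : Fin n) (i : ℕ)
    (hdvdj : (X j - 1 : MvPolynomial (Fin n) F) ^ i ∣ X j ^ r j - 1)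
    (h : MvPolynomial (Fin n) F) (hd : (X j - 1) ^ i ∣ h) :
    (X j - 1) ^ i ∣ rho r k h := by
  by_cases hjk : j = k
  · subst hjk
    have h1 : (X j - 1 : MvPolynomial (Fin n) F) ^ i ∣ h - rho r j h :=
      dvd_trans hdvdj (gen_dvd_sub_rho r j h)
    have := dvd_sub hd h1
    simpa using this
  · obtain ⟨u, rfl⟩ := hd
    rw [rho_X_sub_one_pow_mul r hjk]
    exact Dvd.intro _ rfl

lemma rhoL_pres_dvd (r : Fin n → ℕ) (j : Fin n) (i : ℕ)
    (hdvdj : (X j - 1 : MvPolynomial (Fin n) F) ^ i ∣ X j ^ r j - 1)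
    (l : List (Fin n)) (h : MvPolynomial (Fin n) F) (hd : (X j - 1) ^ i ∣ h) :
    (X j - 1) ^ i ∣ rhoL r l h := by
  induction l with
  | nil => exact hd
  | cons k l ih => exact rho_pres_dvd r j k i hdvdj _ ih

lemma rho_pres_gen_dvd (r : Fin n → ℕ) (k m : Fin n) (h : MvPolynomial (Fin n) F)
    (hd : (X k ^ r k - 1 : MvPolynomial (Fin n) F) ∣ h) :
    (X k ^ r k - 1) ∣ rho r m h := by
  by_cases hmk : m = k
  · subst hmk
    obtain ⟨u, rfl⟩ := hd
    rw [mul_comm, rho_kill]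
    exact dvd_zero _
  · obtain ⟨u, rfl⟩ := hd
    have e : (X k ^ r k - 1 : MvPolynomial (Fin n) F) * u
        = monomial (Finsupp.single k (r k)) 1 * u - monomial 0 1 * u := by
      rw [← X_pow_eq_monomial]
      simp [sub_mul]
    rw [e, map_sub, rho_monomial_mul, rho_monomial_mul]
    · rw [← X_pow_eq_monomial]
      have : (monomial 0 1 : MvPolynomial (Fin n) F) = 1 := by simp
      rw [this]
      exact ⟨rho r m u, by ring⟩
    · rfl
    · rw [Finsupp.single_apply, if_neg (fun hc => hmk hc.symm)]

lemma rhoL_kill (r : Fin n → ℕ) (k : Fin n) (l : List (Fin n)) (hk : k ∈ l)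
    (h : MvPolynomial (Fin n) F) (hd : (X k ^ r k - 1 : MvPolynomial (Fin n) F) ∣ h) :
    rhoL r l h = 0 := by
  induction l with
  | nil => simp at hk
  | cons m l ih =>
      show rho r m (rhoL r l h) = 0
      by_cases hkl : k ∈ l
      · rw [ih hkl, map_zero]
      · have hmk : m = k := by
          rcases List.mem_cons.mp hk with h1 | h1
          · exact h1.symm
          · exact absurd h1 hkl
        subst hmk
        have : (X m ^ r m - 1 : MvPolynomial (Fin n) F) ∣ rhoL r l h := by
          clear ih hk hkl
          induction l with
          | nil => exact hd
          | cons m' l' ih' =>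
              exact rho_pres_gen_dvd r m m' _ ih'
        obtain ⟨u, hu⟩ := this
        rw [hu, mul_comm, rho_kill]

lemma mem_iff_dvd_all (r ι : Fin n → ℕ)
    (hdvdX : ∀ j, (X j - 1 : MvPolynomial (Fin n) F) ^ ι j ∣ X j ^ r j - 1)
    (f : MvPolynomial (Fin n) F) (hf : ∀ j, degreeOf j f < r j) :
    f ∈ Ideal.span {(∏ j : Fin n, (X j - 1) ^ ι j : MvPolynomial (Fin n) F)} ⊔
        Ideal.span (Set.range fun j : Fin n => (X j ^ r j - 1 : MvPolynomial (Fin n) F)) ↔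
      ∀ j, (X j - 1 : MvPolynomial (Fin n) F) ^ ι j ∣ f := by
  constructor
  · intro hmem j
    rw [← Ideal.span_union, Set.singleton_union, Ideal.mem_span_insert] at hmem
    obtain ⟨a, z, hz, rfl⟩ := hmem
    obtain ⟨c, rfl⟩ := Submodule.mem_span_range_iff_exists_fun _ |>.mp hz
    set g : MvPolynomial (Fin n) F := ∏ j : Fin n, (X j - 1) ^ ι j with hg
    set L := Finset.univ.toList (α := Fin n) with hL
    have hfL : a * g + ∑ i, c i • (X i ^ r i - 1) =
        rhoL r L (a * g + ∑ i, c i • (X i ^ r i - 1)) := by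
      rw [rhoL_id r L _ hf]
    rw [hfL, map_add, map_sum]
    have hz0 : ∀ i : Fin n, rhoL (F := F) r L (c i • (X i ^ r i - 1)) = 0 := by
      intro i
      apply rhoL_kill r i L (Finset.mem_toList.mpr (Finset.mem_univ i))
      rw [smul_eq_mul]
      exact dvd_mul_left _ _
    rw [Finset.sum_congr rfl (fun i _ => hz0 i), Finset.sum_const_zero, add_zero]
    apply rhoL_pres_dvd r j (ι j) (hdvdX j)
    exact dvd_mul_of_dvd_right (Finset.dvd_prod_of_mem _ (Finset.mem_univ j)) a
  · intro h
    exact Ideal.mem_sup_left (Ideal.mem_span_singleton.mpr (prod_pow_dvd ι f h))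

/-- The multivariate monomial-like code `⟨(x₁−1)^{i₁}⋯(x_n−1)^{i_n}⟩ ⊆ F_q[x]/⟨x_j^{r_j}−1⟩`
is the iterated product of the one-variable codes `C_{x_j} = ⟨(x_j−1)^{i_j}⟩`:
a (degree-bounded) representative `f` gives a codeword iff for every variable `x_j` and every
fixed choice of the remaining exponents, the corresponding one-variable polynomial in `x_j`
represents an element of `C_{x_j}`. -/
theorem stmt_6 (F : Type) [Field F] [Fintype F]
    (n : ℕ) (r ι : Fin n → ℕ) (hr : ∀ j, 0 < r j) (hι : ∀ j, 0 < ι j)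
    (hdvd : ∀ j, (Polynomial.X - 1) ^ ι j ∣ (Polynomial.X ^ r j - 1 : Polynomial F))
    (I : Ideal (MvPolynomial (Fin n) F))
    (hI : I = Ideal.span (Set.range fun j : Fin n => X j ^ r j - 1))
    (C : Ideal (MvPolynomial (Fin n) F ⧸ I))
    (hC : C = Ideal.span {Ideal.Quotient.mk I (∏ j : Fin n, (X j - 1) ^ ι j)})
    (Ix : Fin n → Ideal (Polynomial F))
    (hIx : ∀ j, Ix j = Ideal.span {Polynomial.X ^ r j - 1})
    (Cx : (j : Fin n) → Ideal (Polynomial F ⧸ Ix j))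
    (hCx : ∀ j, Cx j = Ideal.span {Ideal.Quotient.mk (Ix j) ((Polynomial.X - 1) ^ ι j)})
    (f : MvPolynomial (Fin n) F) (hf : ∀ j, degreeOf j f < r j) :
    Ideal.Quotient.mk I f ∈ C ↔
      ∀ j : Fin n, ∀ m : Fin n →₀ ℕ, (∀ j' ≠ j, m j' < r j') →
        Ideal.Quotient.mk (Ix j)
          (∑ t ∈ Finset.range (r j),
            Polynomial.C (coeff (Finsupp.update m j t) f) * Polynomial.X ^ t) ∈ Cx j := by
  have hdvdX : ∀ j, (X j - 1 : MvPolynomial (Fin n) F) ^ ι j ∣ X j ^ r j - 1 := by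
    intro j
    have := map_dvd (Polynomial.aeval (X j : MvPolynomial (Fin n) F)) (hdvd j)
    simpa using this
  -- left-hand side
  have hCmap : C = Ideal.map (Ideal.Quotient.mk I)
      (Ideal.span {(∏ j : Fin n, (X j - 1) ^ ι j : MvPolynomial (Fin n) F)}) := by
    rw [hC, Ideal.map_span, Set.image_singleton]
  have hLHS : Ideal.Quotient.mk I f ∈ C ↔ ∀ j, (X j - 1 : MvPolynomial (Fin n) F) ^ ι j ∣ f := by
    rw [hCmap, Ideal.mem_quotient_iff_mem_sup, hI]
    exact mem_iff_dvd_all r ι hdvdX f hf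
  -- right-hand side, fixed j and m
  have hRHS : ∀ (j : Fin n) (s : Polynomial F),
      Ideal.Quotient.mk (Ix j) s ∈ Cx j ↔ (Polynomial.X - 1) ^ ι j ∣ s := by
    intro j s
    have hle : Ix j ≤ Ideal.span {((Polynomial.X - 1) ^ ι j : Polynomial F)} := by
      rw [hIx j]
      exact Ideal.span_singleton_le_span_singleton.mpr (hdvd j)
    rw [hCx j,
      show (Ideal.span {Ideal.Quotient.mk (Ix j) ((Polynomial.X - 1) ^ ι j)}) =
        Ideal.map (Ideal.Quotient.mk (Ix j))
          (Ideal.span {((Polynomial.X - 1) ^ ι j : Polynomial F)}) by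
        rw [Ideal.map_span, Set.image_singleton],
      Ideal.mem_quotient_iff_mem_sup, sup_eq_left.mpr hle, Ideal.mem_span_singleton]
  rw [hLHS]
  constructor
  · intro h j m hm
    rw [hRHS]
    exact (dvd_iff_slices r j (ι j) f hf).mp (h j) m hm
  · intro h j
    rw [dvd_iff_slices r j (ι j) f hf]
    intro m hm
    rw [← hRHS]
    exact h j m hm
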